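/- Safety when ahead: suppose the ego car is ahead of the other car, both with velocities in [0, V], V > 0, A_max > 0, A_min > 0 with A_min ≤ A_max. If x_l + L ≤ x_e and (x_l - V·0) - (v_l - V)²/(2·A_max) + L < (x_e - V·0) - (v_e - V)²/(2·A_min), then for all t ≥ 0, when the ego car accelerates at A_min (speed clamped at V) and the other car accelerates at A_max (speed clamped at V), the separation x_e(t) - x_l(t) ≥ L is maintained. -/

import Mathlib

set_option maxHeartbeats 1000000


/-- Position of a car accelerating at rate `a`, speed saturating at `V`. -/
noncomputable def satPos (V x v a t : ℝ) : ℝ :=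
  if t ≤ (V - v) / a then x + v * t + (a / 2) * t ^ 2
  else x + v * ((V - v) / a) + (a / 2) * ((V - v) / a) ^ 2 + V * (t - (V - v) / a)

/-- Safety when the ego car is ahead: separation is maintained for all time. -/
theorem safe_front (xe ve xl vl V Amin Amax L : ℝ)
    (hV : 0 < V) (hAmax : 0 < Amax) (hAmin : 0 < Amin) (hA : Amin ≤ Amax)
    (hve0 : 0 ≤ ve) (hveV : ve ≤ V) (hvl0 : 0 ≤ vl) (hvlV : vl ≤ V) (hL : 0 < L)
    (hinit : xl + L ≤ xe)
    (hstop : (xl - V * 0) - (vl - V) ^ 2 / (2 * Amax) + L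
        < (xe - V * 0) - (ve - V) ^ 2 / (2 * Amin)) :
    ∀ t : ℝ, 0 ≤ t → satPos V xe ve Amin t - satPos V xl vl Amax t ≥ L := by
  intro t ht
  set Te := (V - ve) / Amin with hTe
  set Tl := (V - vl) / Amax with hTl
  have hTe' : Amin * Te = V - ve := by
    rw [hTe]; field_simp
  have hTl' : Amax * Tl = V - vl := by
    rw [hTl]; field_simp
  have hTe0 : 0 ≤ Te := div_nonneg (by linarith) hAmin.le
  have hTl0 : 0 ≤ Tl := div_nonneg (by linarith) hAmax.le
  have hve : ve = V - Amin * Te := by linarith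
  have hvl : vl = V - Amax * Tl := by linarith
  have hstop' : xl - Amax * Tl ^ 2 / 2 + L < xe - Amin * Te ^ 2 / 2 := by
    have h1 : (vl - V) ^ 2 / (2 * Amax) = Amax * Tl ^ 2 / 2 := by
      have h : (vl - V) ^ 2 = (Amax * Tl) ^ 2 := by rw [hTl']; ring
      rw [h]; field_simp
    have h2 : (ve - V) ^ 2 / (2 * Amin) = Amin * Te ^ 2 / 2 := by
      have h : (ve - V) ^ 2 = (Amin * Te) ^ 2 := by rw [hTe']; ring
      rw [h]; field_simp
    rw [h1, h2] at hstop
    linarith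
  simp only [satPos, ← hTe, ← hTl]
  clear_value Te Tl
  clear hTe hTl hstop
  split_ifs with h1 h2 h2 <;> rw [hve, hvl]
  · -- t ≤ Te, t ≤ Tl : both accelerating
    rcases le_or_gt (Amax * (t - Tl) ^ 2) (Amin * (t - Te) ^ 2) with hc | hc
    · nlinarith [hc, hstop']
    · -- use hinit
      have hab : (Amin * (Te - t)) ^ 2 < (Amax * (Tl - t)) ^ 2 := by
        nlinarith [mul_lt_mul_of_pos_left hc hAmin,
          mul_le_mul_of_nonneg_right hA (sq_nonneg (Tl - t))]
      have hte : Amin * (Te - t) < Amax * (Tl - t) :=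
        lt_of_pow_lt_pow_left₀ 2 (mul_nonneg hAmax.le (by linarith)) hab
      have key : 0 ≤ t * ((Amax * Tl - Amin * Te) - (Amax - Amin) * t / 2) := by
        apply mul_nonneg ht
        nlinarith [mul_nonneg (sub_nonneg.2 hA) ht]
      nlinarith [key, hinit]
  · -- t ≤ Te, t > Tl
    nlinarith [mul_nonneg hAmin.le (sq_nonneg (t - Te)), hstop']
  · -- t > Te, t ≤ Tl
    push_neg at h1
    nlinarith [mul_nonneg (mul_nonneg hAmax.le ht) (sub_nonneg.2 h2),
      mul_nonneg (sub_nonneg.2 hA) (sq_nonneg t),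
      mul_nonneg (mul_nonneg hAmin.le (sub_nonneg.2 h1.le)) (by linarith : (0:ℝ) ≤ t + Te),
      hinit]
  · -- t > Te, t > Tl
    nlinarith [hstop']
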